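/- Over a real closed field F, the symplectic group Sp(2n,F) acts transitively on the Siegel upper half-space X_F = { X + iY : X, Y symmetric n×n over F, Y positive definite }, where Sp(2n,F) acts by fractional linear transformations (A B; C D)·Z = (AZ+B)(CZ+D)^{-1}. -/

import Mathlib

open Matrix Polynomial

/-- A real closed field: an ordered field in which every nonnegative element is a square
and every polynomial of odd degree has a root. -/
def IsRealClosedF (F : Type*) [Field F] [LinearOrder F] [IsStrictOrderedRing F] : Prop :=
  (∀ x : F, 0 ≤ x → ∃ y, y ^ 2 = x) ∧
    ∀ p : Polynomial F, Odd p.natDegree → ∃ x, p.IsRoot x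

/-- A symmetric positive definite matrix over an ordered field. -/
def IsPosDefM {F : Type*} [Field F] [LinearOrder F] [IsStrictOrderedRing F] {n : ℕ}
    (Y : Matrix (Fin n) (Fin n) F) : Prop :=
  Yᵀ = Y ∧ ∀ v : Fin n → F, v ≠ 0 → 0 < v ⬝ᵥ Y.mulVec v

/-- The quadratic extension `K = F[i]`. -/
abbrev Kc (F : Type*) [CommRing F] : Type _ :=
  AdjoinRoot (Polynomial.X ^ 2 + 1 : Polynomial F)

/-- The point `Z = X + iY` of the Siegel upper half-space, as a matrix over `K = F[i]`. -/
noncomputable def siegelPt {F : Type*} [CommRing F] {n : ℕ}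
    (X Y : Matrix (Fin n) (Fin n) F) : Matrix (Fin n) (Fin n) (Kc F) :=
  X.map (algebraMap F (Kc F)) +
    (AdjoinRoot.root (Polynomial.X ^ 2 + 1 : Polynomial F)) • Y.map (algebraMap F (Kc F))

/-- A positive definite symmetric matrix over an ordered field in which every nonnegative
element is a square is congruent to the identity. -/
lemma exists_congr_one {F : Type*} [Field F] [LinearOrder F] [IsStrictOrderedRing F]
    (hsq : ∀ x : F, 0 ≤ x → ∃ y, y ^ 2 = x) {n : ℕ}
    {Y : Matrix (Fin n) (Fin n) F} (hY : IsPosDefM Y) :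
    ∃ A : Matrix (Fin n) (Fin n) F, A * Y * Aᵀ = 1 := by
  haveI : Invertible (2 : F) := invertibleOfNonzero two_ne_zero
  set B : LinearMap.BilinForm F (Fin n → F) := Matrix.toLinearMap₂' F Y with hB
  have hBapp : ∀ x y : Fin n → F, B x y = x ⬝ᵥ Y.mulVec y := fun x y =>
    Matrix.toLinearMap₂'_apply' Y x y
  have hBsymm : LinearMap.IsSymm B := by
    rw [LinearMap.isSymm_def]
    intro x y
    simp only [RingHom.id_apply, hBapp]
    rw [← hY.1, Matrix.dotProduct_mulVec, Matrix.vecMul_transpose, dotProduct_comm, hY.1]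
  obtain ⟨v0, hv0⟩ := LinearMap.BilinForm.exists_orthogonal_basis hBsymm
  set v : Module.Basis (Fin n) F (Fin n → F) := v0.reindex (finCongr (Module.finrank_fin_fun F))
  have hvo : ∀ i j : Fin n, i ≠ j → B (v i) (v j) = 0 := by
    intro i j hij
    have hne : (finCongr (Module.finrank_fin_fun F)).symm i ≠
        (finCongr (Module.finrank_fin_fun F)).symm j :=
      fun h => hij ((finCongr (Module.finrank_fin_fun F)).symm.injective h)
    have := hv0 hne
    simpa [v, Module.Basis.reindex_apply] using this
  have hpos : ∀ i : Fin n, 0 < B (v i) (v i) := fun i => by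
    rw [hBapp]; exact hY.2 (v i) (v.ne_zero i)
  choose d hd using fun i => hsq (B (v i) (v i)) (hpos i).le
  have hdne : ∀ i, d i ≠ 0 := fun i => by
    intro h
    have h2 := hpos i
    rw [← hd i, h] at h2
    simp at h2
  refine ⟨Matrix.of (fun i j => (d i)⁻¹ * v i j), ?_⟩
  ext i j
  have key : (Matrix.of (fun i j => (d i)⁻¹ * v i j) * Y *
      (Matrix.of (fun i j => (d i)⁻¹ * v i j))ᵀ) i j
      = (d i)⁻¹ * (d j)⁻¹ * B (v i) (v j) := by
    rw [hBapp]
    simp only [Matrix.mul_apply, Matrix.transpose_apply, Matrix.of_apply,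
      dotProduct, Matrix.mulVec, dotProduct, Finset.mul_sum]
    conv_rhs => rw [Finset.sum_comm]
    refine Finset.sum_congr rfl fun k _ => ?_
    rw [Finset.sum_mul]
    refine Finset.sum_congr rfl fun l _ => ?_
    ring
  rw [key]
  rcases eq_or_ne i j with rfl | hij
  · rw [← hd i, Matrix.one_apply_eq, sq, ← mul_inv]
    exact inv_mul_cancel₀ (mul_ne_zero (hdne i) (hdne i))
  · rw [hvo i j hij, Matrix.one_apply_ne hij, mul_zero]

/-- Any two positive definite symmetric matrices are congruent. -/
lemma posdef_congr {F : Type*} [Field F] [LinearOrder F] [IsStrictOrderedRing F]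
    (hsq : ∀ x : F, 0 ≤ x → ∃ y, y ^ 2 = x) {n : ℕ}
    {Y Y' : Matrix (Fin n) (Fin n) F} (hY : IsPosDefM Y) (hY' : IsPosDefM Y') :
    ∃ A : Matrix (Fin n) (Fin n) F, IsUnit A.det ∧ A * Y * Aᵀ = Y' := by
  obtain ⟨A₁, h1⟩ := exists_congr_one hsq hY
  obtain ⟨A₂, h2⟩ := exists_congr_one hsq hY'
  have hu1 : IsUnit A₁.det := by
    apply Matrix.isUnit_det_of_right_inverse (B := Y * A₁ᵀ)
    rw [← mul_assoc]; exact h1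
  have hu2 : IsUnit A₂.det := by
    apply Matrix.isUnit_det_of_right_inverse (B := Y' * A₂ᵀ)
    rw [← mul_assoc]; exact h2
  have hu2inv : IsUnit (A₂⁻¹).det := Matrix.isUnit_nonsing_inv_det A₂ hu2
  have hu2t : IsUnit (A₂ᵀ).det := by rwa [Matrix.det_transpose]
  refine ⟨A₂⁻¹ * A₁, ?_, ?_⟩
  · rw [Matrix.det_mul]; exact hu2inv.mul hu1
  · have hstep : A₂⁻¹ * A₁ * Y * (A₂⁻¹ * A₁)ᵀ = A₂⁻¹ * (A₁ * Y * A₁ᵀ) * (A₂⁻¹)ᵀ := by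
      rw [Matrix.transpose_mul]
      simp only [mul_assoc]
    rw [hstep, h1, mul_one]
    calc A₂⁻¹ * (A₂⁻¹)ᵀ = A₂⁻¹ * (A₂ * Y' * A₂ᵀ) * (A₂ᵀ)⁻¹ := by
          rw [h2, mul_one, Matrix.transpose_nonsing_inv]
      _ = (A₂⁻¹ * A₂) * Y' * (A₂ᵀ * (A₂ᵀ)⁻¹) := by simp only [mul_assoc]
      _ = Y' := by
          rw [Matrix.nonsing_inv_mul _ hu2, Matrix.mul_nonsing_inv _ hu2t, one_mul, mul_one]

/-- Over a real closed field `F`, the symplectic group `Sp(2n,F)` acts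
transitively on the Siegel upper half-space
`X_F = { X + iY : X, Y ∈ Sym(n,F), Y positive definite }`, acting by fractional linear
transformations `(A B; C D)·Z = (AZ+B)(CZ+D)⁻¹`. -/
theorem symplectic_transitive_on_siegel_space
    (F : Type*) [Field F] [LinearOrder F] [IsStrictOrderedRing F] (hF : IsRealClosedF F) (n : ℕ)
    (X Y X' Y' : Matrix (Fin n) (Fin n) F)
    (hX : Xᵀ = X) (hY : IsPosDefM Y) (hX' : X'ᵀ = X') (hY' : IsPosDefM Y') :
    ∃ g ∈ Matrix.symplecticGroup (Fin n) F,
      IsUnit (((Matrix.toBlocks₂₁ g).map (algebraMap F (Kc F)) * siegelPt X Y +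
          (Matrix.toBlocks₂₂ g).map (algebraMap F (Kc F))).det) ∧
      ((Matrix.toBlocks₁₁ g).map (algebraMap F (Kc F)) * siegelPt X Y +
          (Matrix.toBlocks₁₂ g).map (algebraMap F (Kc F))) *
        ((Matrix.toBlocks₂₁ g).map (algebraMap F (Kc F)) * siegelPt X Y +
          (Matrix.toBlocks₂₂ g).map (algebraMap F (Kc F)))⁻¹ = siegelPt X' Y' := by
  classical
  obtain ⟨A, hdetA, hAY⟩ := posdef_congr hF.1 hY hY'
  set φ := algebraMap F (Kc F) with hφ
  -- the translation part
  have hS : (X' - A * X * Aᵀ)ᵀ = X' - A * X * Aᵀ := by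
    rw [Matrix.transpose_sub, hX', Matrix.transpose_mul, Matrix.transpose_mul,
      Matrix.transpose_transpose, hX, mul_assoc]
  have hAAinv : A * A⁻¹ = 1 := Matrix.mul_nonsing_inv A hdetA
  have hAinvA : A⁻¹ * A = 1 := Matrix.nonsing_inv_mul A hdetA
  have hDAt : (A⁻¹)ᵀ * Aᵀ = 1 := by
    rw [← Matrix.transpose_mul, hAAinv, Matrix.transpose_one]
  have hAtD : Aᵀ * (A⁻¹)ᵀ = 1 := by
    rw [← Matrix.transpose_mul, hAinvA, Matrix.transpose_one]
  have hADt : A * ((A⁻¹)ᵀ)ᵀ = 1 := by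
    rw [Matrix.transpose_transpose, hAAinv]
  have hBAt : (X' - A * X * Aᵀ) * (A⁻¹)ᵀ * Aᵀ = X' - A * X * Aᵀ := by
    rw [mul_assoc, hDAt, mul_one]
  have hABt : A * ((X' - A * X * Aᵀ) * (A⁻¹)ᵀ)ᵀ = X' - A * X * Aᵀ := by
    rw [Matrix.transpose_mul, Matrix.transpose_transpose, hS, ← mul_assoc, hAAinv, one_mul]
  have hmem : Matrix.fromBlocks A ((X' - A * X * Aᵀ) * (A⁻¹)ᵀ) 0 ((A⁻¹)ᵀ) ∈
      Matrix.symplecticGroup (Fin n) F := by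
    rw [SymplecticGroup.mem_iff, Matrix.J, Matrix.fromBlocks_transpose,
      Matrix.fromBlocks_multiply, Matrix.fromBlocks_multiply]
    simp only [Matrix.mul_zero, Matrix.zero_mul, Matrix.mul_one, Matrix.one_mul,
      Matrix.mul_neg, Matrix.neg_mul, add_zero, zero_add, Matrix.transpose_zero,
      mul_zero, zero_mul, mul_one, one_mul, mul_neg, neg_mul, neg_neg]
    rw [hBAt, hABt, hADt, hDAt]
    simp
  refine ⟨_, hmem, ?_, ?_⟩ <;>
    simp only [Matrix.toBlocks_fromBlocks₁₁, Matrix.toBlocks_fromBlocks₁₂,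
      Matrix.toBlocks_fromBlocks₂₁, Matrix.toBlocks_fromBlocks₂₂] <;>
    rw [show ((0 : Matrix (Fin n) (Fin n) F)).map φ = 0 from Matrix.map_zero _ (map_zero _),
      Matrix.zero_mul, zero_add]
  · -- the denominator is invertible
    rw [show ((A⁻¹)ᵀ.map ⇑φ) = φ.mapMatrix (A⁻¹)ᵀ from rfl, ← RingHom.map_det]
    exact (Matrix.isUnit_det_of_right_inverse hDAt).map φ
  · -- the fractional linear action sends X + iY to X' + iY'
    have hmapmul : ∀ M N : Matrix (Fin n) (Fin n) F,
        (M * N).map φ = M.map φ * N.map φ := fun M N => Matrix.map_mul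
    have hmapone : (1 : Matrix (Fin n) (Fin n) F).map φ = 1 :=
      Matrix.map_one _ (map_zero _) (map_one _)
    have hinvD : (((A⁻¹)ᵀ).map φ)⁻¹ = (Aᵀ).map φ := by
      apply Matrix.inv_eq_left_inv
      rw [← hmapmul, hAtD, hmapone]
    rw [hinvD]
    simp only [siegelPt, ← hφ]
    rw [mul_add, add_mul, add_mul, Matrix.mul_smul, Matrix.smul_mul]
    simp only [← hmapmul]
    rw [hBAt, hAY]
    rw [add_right_comm, ← Matrix.map_add _ (fun a b => map_add φ a b), add_sub_cancel]
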